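/- For every k ≥ 2, β_k(U−1) = p + q·β_{k−1}(U−2), where U−L ≥ 4. -/

import Mathlib

open MeasureTheory ProbabilityTheory Filter
open scoped ENNReal Classical

noncomputable section

variable {Ω : Type*} [MeasurableSpace Ω]

/-- The `k`-th step of the ladder chain `L(2,2,p)` built from the driving
sequence `ξ` (indexed from 1): `X₁ = ±1` according to `ξ₁`, and for `k ≥ 2`,
`X_k = -1` if `ξ_k = -1`, `X_k = 2` if `ξ_k = ξ_{k-1} = 1`, and `X_k = 1`
if `ξ_k = 1, ξ_{k-1} = -1`. -/
def ladderX (ξ : ℕ → Ω → ℤ) (k : ℕ) (ω : Ω) : ℤ :=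
  if k = 1 then (if ξ 1 ω = 1 then 1 else -1)
  else if ξ k ω = -1 then -1
  else if ξ (k - 1) ω = 1 then 2 else 1

/-- The ladder chain `S_n = X₁ + ⋯ + X_n` (with `S_0 = 0`). -/
def ladderS (ξ : ℕ → Ω → ℤ) (n : ℕ) (ω : Ω) : ℤ :=
  ∑ k ∈ Finset.Icc 1 n, ladderX ξ k ω

/-- The truncated exit time `τ_k^x`: the least `l ≤ k` with `S_l^x ≤ L` or
`S_l^x ≥ U`, and `k` if there is no such `l`. -/
def ladderTau (ξ : ℕ → Ω → ℤ) (L U x : ℤ) (k : ℕ) (ω : Ω) : ℕ :=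
  if ∃ l ≤ k, (x + ladderS ξ l ω ≤ L ∨ U ≤ x + ladderS ξ l ω)
  then sInf {l | l ≤ k ∧ (x + ladderS ξ l ω ≤ L ∨ U ≤ x + ladderS ξ l ω)}
  else k

/-- The event `A_k^x`: the walk started at `x` exits through the lower
barrier `L` within the first `k` steps. -/
def ladderA (ξ : ℕ → Ω → ℤ) (L U x : ℤ) (k : ℕ) : Set Ω :=
  ⋃ l ∈ Finset.range (k + 1),
    {ω | ladderTau ξ L U x k ω = l ∧ x + ladderS ξ l ω ≤ L}

/-- The event `B_k^x`: the walk started at `x` exits through the upper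
barrier `U` within the first `k` steps. -/
def ladderB (ξ : ℕ → Ω → ℤ) (L U x : ℤ) (k : ℕ) : Set Ω :=
  ⋃ l ∈ Finset.range (k + 1),
    {ω | ladderTau ξ L U x k ω = l ∧ U ≤ x + ladderS ξ l ω}

set_option linter.unusedSectionVars false
set_option linter.unusedVariables false
set_option linter.unreachableTactic false
set_option linter.unusedTactic false

lemma ladderS_zero (ξ : ℕ → Ω → ℤ) (ω : Ω) : ladderS ξ 0 ω = 0 := by
  simp [ladderS]

lemma ladderS_succ (ξ : ℕ → Ω → ℤ) (n : ℕ) (ω : Ω) :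
    ladderS ξ (n + 1) ω = ladderS ξ n ω + ladderX ξ (n + 1) ω := by
  rw [ladderS, ladderS, Finset.sum_Icc_succ_top (by omega)]

/-- Characterization of `ladderB` avoiding `sInf`. -/
lemma mem_ladderB_iff (ξ : ℕ → Ω → ℤ) (L U x : ℤ) (k : ℕ) (ω : Ω) :
    ω ∈ ladderB ξ L U x k ↔ ∃ l, l ≤ k ∧ U ≤ x + ladderS ξ l ω ∧
      ∀ j < l, ¬(x + ladderS ξ j ω ≤ L ∨ U ≤ x + ladderS ξ j ω) := by
  classical
  set s : Set ℕ := {l | l ≤ k ∧ (x + ladderS ξ l ω ≤ L ∨ U ≤ x + ladderS ξ l ω)} with hs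
  have hmem : ω ∈ ladderB ξ L U x k ↔
      ∃ l ≤ k, ladderTau ξ L U x k ω = l ∧ U ≤ x + ladderS ξ l ω := by
    simp only [ladderB, Set.mem_iUnion, Finset.mem_range, Set.mem_setOf_eq]
    constructor
    · rintro ⟨l, hl, h1, h2⟩; exact ⟨l, by omega, h1, h2⟩
    · rintro ⟨l, hl, h1, h2⟩; exact ⟨l, by omega, h1, h2⟩
  rw [hmem]
  constructor
  · rintro ⟨l, hlk, hτ, hU⟩
    by_cases h : ∃ l ≤ k, (x + ladderS ξ l ω ≤ L ∨ U ≤ x + ladderS ξ l ω)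
    · have hτ' : ladderTau ξ L U x k ω = sInf s := by
        rw [ladderTau, if_pos h]
      refine ⟨l, hlk, hU, fun j hj hj' => ?_⟩
      have : j ∉ s := Nat.notMem_of_lt_sInf (by rw [← hτ', hτ]; exact hj)
      exact this ⟨le_trans (le_of_lt hj) hlk, hj'⟩
    · exact absurd ⟨l, hlk, Or.inr hU⟩ h
  · rintro ⟨l, hlk, hU, hmin⟩
    have hls : l ∈ s := ⟨hlk, Or.inr hU⟩
    have h : ∃ l ≤ k, (x + ladderS ξ l ω ≤ L ∨ U ≤ x + ladderS ξ l ω) := ⟨l, hlk, Or.inr hU⟩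
    have hτ : ladderTau ξ L U x k ω = sInf s := by rw [ladderTau, if_pos h]
    have hinf : sInf s = l := by
      refine le_antisymm (Nat.sInf_le hls) ?_
      by_contra hcon
      push_neg at hcon
      exact hmin _ hcon (Nat.sInf_mem ⟨l, hls⟩).2
    exact ⟨l, hlk, by rw [hτ, hinf], hU⟩

section Congr
variable {Ω' : Type*}

lemma ladderX_congr (ξ : ℕ → Ω → ℤ) (η : ℕ → Ω' → ℤ) (ω : Ω) (ν : Ω') (m : ℕ)
    (h : ∀ n, 1 ≤ n → n ≤ m → ξ n ω = η n ν) (n : ℕ) (h1 : 1 ≤ n) (h2 : n ≤ m) :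
    ladderX ξ n ω = ladderX η n ν := by
  rcases eq_or_ne n 1 with rfl | hn
  · simp [ladderX, h 1 le_rfl h2]
  · have hn1 : 1 ≤ n - 1 := by omega
    rw [ladderX, ladderX, if_neg hn, if_neg hn, h n h1 h2, h (n-1) hn1 (by omega)]

lemma ladderS_congr (ξ : ℕ → Ω → ℤ) (η : ℕ → Ω' → ℤ) (ω : Ω) (ν : Ω') (m : ℕ)
    (h : ∀ n, 1 ≤ n → n ≤ m → ξ n ω = η n ν) (l : ℕ) (hl : l ≤ m) :
    ladderS ξ l ω = ladderS η l ν := by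
  refine Finset.sum_congr rfl fun n hn => ?_
  rw [Finset.mem_Icc] at hn
  exact ladderX_congr ξ η ω ν m h n hn.1 (le_trans hn.2 hl)

end Congr

section Shift

lemma ladderX_shift (ξ : ℕ → Ω → ℤ) (ω : Ω) (hval : ∀ n, ξ n ω = 1 ∨ ξ n ω = -1)
    (h1 : ξ 1 ω = -1) (j : ℕ) (hj : 1 ≤ j) :
    ladderX (fun n => ξ (n + 1)) j ω = ladderX ξ (j + 1) ω := by
  rcases eq_or_ne j 1 with rfl | hj1
  · rcases hval 2 with h2 | h2 <;> simp [ladderX, h2, h1]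
  · have h' : ¬(j + 1 = 1) := by omega
    unfold ladderX
    rw [if_neg hj1, if_neg h']
    have e1 : j + 1 - 1 = j := by omega
    have e2 : j - 1 + 1 = j := by omega
    rw [e1]
    simp only [e2]

lemma ladderS_shift (ξ : ℕ → Ω → ℤ) (ω : Ω) (hval : ∀ n, ξ n ω = 1 ∨ ξ n ω = -1)
    (h1 : ξ 1 ω = -1) (l : ℕ) :
    ladderS ξ (l + 1) ω = -1 + ladderS (fun n => ξ (n + 1)) l ω := by
  induction l with
  | zero =>
    have : ladderS ξ 1 ω = ladderX ξ 1 ω := by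
      rw [ladderS]; simp
    rw [this, ladderX, if_pos rfl, if_neg (by rw [h1]; decide), ladderS]
    simp
  | succ l ih =>
    have e1 : ladderS ξ (l + 1 + 1) ω = ladderS ξ (l + 1) ω + ladderX ξ (l + 1 + 1) ω := by
      rw [ladderS, ladderS, Finset.sum_Icc_succ_top (by omega)]
    have e2 : ladderS (fun n => ξ (n + 1)) (l + 1) ω
        = ladderS (fun n => ξ (n + 1)) l ω + ladderX (fun n => ξ (n + 1)) (l + 1) ω := by
      rw [ladderS, ladderS, Finset.sum_Icc_succ_top (by omega)]
    rw [e1, e2, ih, ladderX_shift ξ ω hval h1 (l + 1) (by omega)]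
    ring

end Shift

/-- Main pathwise identity: starting from `U-1`, the event of exiting through
the top in `k+1` steps is: first step up, or first step down and then exit
through the top from `U-2` in `k` steps with the shifted driving sequence. -/
lemma ladderB_top_split (ξ : ℕ → Ω → ℤ) (hval : ∀ n ω, ξ n ω = 1 ∨ ξ n ω = -1)
    (L U : ℤ) (hLU : U - L ≥ 4) (m : ℕ) (hm : 1 ≤ m) :
    ladderB ξ L U (U - 1) (m + 1) =
      {ω | ξ 1 ω = 1} ∪
        ({ω | ξ 1 ω = -1} ∩ ladderB (fun n => ξ (n + 1)) L U (U - 2) m) := by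
  ext ω
  have hS1 : ladderS ξ 1 ω = ladderX ξ 1 ω := by rw [ladderS]; simp
  simp only [Set.mem_union, Set.mem_setOf_eq, Set.mem_inter_iff]
  rcases hval 1 ω with h1 | h1
  · -- ξ₁ = 1 : ω is in both sides
    constructor
    · intro _; exact Or.inl h1
    · intro _
      rw [mem_ladderB_iff]
      refine ⟨1, by omega, ?_, ?_⟩
      · rw [hS1, ladderX, if_pos rfl, if_pos h1]; omega
      · intro j hj
        interval_cases j
        rw [ladderS_zero]
        push_neg
        constructor <;> omega
  · -- ξ₁ = -1 : shift
    have hvω : ∀ n, ξ n ω = 1 ∨ ξ n ω = -1 := fun n => hval n ω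
    have hshift := ladderS_shift ξ ω hvω h1
    simp only [mem_ladderB_iff]
    constructor
    · rintro ⟨l, hlk, hU, hmin⟩
      rcases l with _ | l'
      · rw [ladderS_zero] at hU; omega
      · right
        refine ⟨h1, l', by omega, ?_, ?_⟩
        · rw [hshift l'] at hU; omega
        · intro j hj
          have := hmin (j + 1) (by omega)
          rw [hshift j] at this
          intro hc
          apply this
          rcases hc with hc | hc
          · left; omega
          · right; omega
    · rintro (hc | ⟨-, l', hl', hU, hmin⟩)
      · rw [h1] at hc; exact absurd hc (by decide)
      · refine ⟨l' + 1, by omega, ?_, ?_⟩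
        · rw [hshift l']; omega
        · intro j hj
          rcases j with _ | j'
          · rw [ladderS_zero]
            push_neg
            constructor <;> omega
          · have := hmin j' (by omega)
            rw [hshift j']
            intro hc
            apply this
            rcases hc with hc | hc
            · left; omega
            · right; omega

section Meas

lemma measurable_ladderX (ξ : ℕ → Ω → ℤ) (hmeas : ∀ n, Measurable (ξ n)) (n : ℕ) :
    Measurable (ladderX ξ n) := by
  unfold ladderX
  split_ifs with h
  · exact Measurable.ite ((hmeas 1) (measurableSet_singleton 1)) measurable_const
      measurable_const
  · exact Measurable.ite ((hmeas n) (measurableSet_singleton (-1)))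
      measurable_const
      (Measurable.ite ((hmeas (n-1)) (measurableSet_singleton 1)) measurable_const
        measurable_const)

lemma measurable_ladderS (ξ : ℕ → Ω → ℤ) (hmeas : ∀ n, Measurable (ξ n)) (n : ℕ) :
    Measurable (ladderS ξ n) := by
  unfold ladderS
  exact Finset.measurable_sum _ (fun k _ => measurable_ladderX ξ hmeas k)

lemma measurableSet_ladderB (ξ : ℕ → Ω → ℤ) (hmeas : ∀ n, Measurable (ξ n))
    (L U x : ℤ) (k : ℕ) : MeasurableSet (ladderB ξ L U x k) := by
  have : ladderB ξ L U x k = ⋃ l ∈ Finset.range (k + 1),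
      ({ω | U ≤ x + ladderS ξ l ω} ∩
        ⋂ j ∈ Finset.range l,
          {ω | x + ladderS ξ j ω ≤ L ∨ U ≤ x + ladderS ξ j ω}ᶜ) := by
    ext ω
    simp only [mem_ladderB_iff, Set.mem_iUnion, Finset.mem_range, Set.mem_inter_iff,
      Set.mem_iInter, Set.mem_setOf_eq, Set.mem_compl_iff]
    constructor
    · rintro ⟨l, h1, h2, h3⟩
      exact ⟨l, by omega, h2, fun j hj => h3 j (by omega)⟩
    · rintro ⟨l, h1, h2, h3⟩
      exact ⟨l, by omega, h2, fun j hj => h3 j (by omega)⟩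
  rw [this]
  refine Finset.measurableSet_biUnion _ (fun l _ => ?_)
  refine MeasurableSet.inter ?_ (Finset.measurableSet_biInter _ (fun j _ => ?_))
  · exact measurableSet_le measurable_const
      ((measurable_ladderS ξ hmeas l).const_add x)
  · refine MeasurableSet.compl (MeasurableSet.union ?_ ?_)
    · exact measurableSet_le ((measurable_ladderS ξ hmeas j).const_add x) measurable_const
    · exact measurableSet_le measurable_const ((measurable_ladderS ξ hmeas j).const_add x)

variable (p q : ℝ)

lemma ladder_prob_one (P : Measure Ω) (ξ : ℕ → Ω → ℤ)
    (hprob : ∀ n, 1 ≤ n → P {ω | ξ n ω = 1} = ENNReal.ofReal p)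
    (n : ℕ) (hn : 1 ≤ n) : P (ξ n ⁻¹' {(1:ℤ)}) = ENNReal.ofReal p := by
  have : ξ n ⁻¹' {(1:ℤ)} = {ω | ξ n ω = 1} := by ext ω; simp
  rw [this]; exact hprob n hn

lemma ladder_prob_neg_one (hp0 : 0 < p) (hp1 : p < 1) (hq : q = 1 - p)
    (P : Measure Ω) [IsProbabilityMeasure P] (ξ : ℕ → Ω → ℤ)
    (hmeas : ∀ n, Measurable (ξ n))
    (hval : ∀ n ω, ξ n ω = 1 ∨ ξ n ω = -1)
    (hprob : ∀ n, 1 ≤ n → P {ω | ξ n ω = 1} = ENNReal.ofReal p)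
    (n : ℕ) (hn : 1 ≤ n) : P (ξ n ⁻¹' {(-1:ℤ)}) = ENNReal.ofReal q := by
  have hc : ξ n ⁻¹' {(-1:ℤ)} = (ξ n ⁻¹' {(1:ℤ)})ᶜ := by
    ext ω
    simp only [Set.mem_preimage, Set.mem_singleton_iff, Set.mem_compl_iff]
    rcases hval n ω with h | h <;> rw [h] <;> simp
  rw [hc, measure_compl ((hmeas n) (measurableSet_singleton 1)) (measure_ne_top P _),
    ladder_prob_one p P ξ hprob n hn, measure_univ, hq,
    ENNReal.ofReal_sub 1 hp0.le, ENNReal.ofReal_one]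

end Meas

section Atoms

variable (p q : ℝ)

/-- The key measure computation: intersecting with `{ξ₁ = -1}` and shifting the
tuple of driving variables by one costs a factor `q`. -/
lemma ladder_key (hp0 : 0 < p) (hp1 : p < 1) (hq : q = 1 - p)
    (P : Measure Ω) [IsProbabilityMeasure P] (ξ : ℕ → Ω → ℤ)
    (hmeas : ∀ n, Measurable (ξ n))
    (hindep : iIndepFun ξ P)
    (hval : ∀ n ω, ξ n ω = 1 ∨ ξ n ω = -1)
    (hprob : ∀ n, 1 ≤ n → P {ω | ξ n ω = 1} = ENNReal.ofReal p)
    (m : ℕ) (V : Set (Fin m → ℤ)) :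
    P ({ω | ξ 1 ω = -1} ∩ (fun ω (i : Fin m) => ξ (i.1 + 1 + 1) ω) ⁻¹' V)
      = ENNReal.ofReal q * P ((fun ω (i : Fin m) => ξ (i.1 + 1 + 0) ω) ⁻¹' V) := by
  classical
  -- weights
  set w : Bool → ℝ≥0∞ := fun b => if b then ENNReal.ofReal p else ENNReal.ofReal q with hw
  have hpt : ∀ n, 1 ≤ n → ∀ b : Bool,
      P (ξ n ⁻¹' {if b then (1:ℤ) else -1}) = w b := by
    intro n hn b
    cases b
    · simpa [hw] using ladder_prob_neg_one p q hp0 hp1 hq P ξ hmeas hval hprob n hn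
    · simpa [hw] using ladder_prob_one p P ξ hprob n hn
  -- atoms
  set val : (Fin m → Bool) → (Fin m → ℤ) := fun ε i => if ε i then 1 else -1 with hvaldef
  set A : ℕ → (Fin m → Bool) → Set Ω :=
    fun a ε => ⋂ i : Fin m, ξ (i.1 + 1 + a) ⁻¹' {val ε i} with hA
  set F : Finset (Fin m → Bool) := Finset.univ.filter (fun ε => val ε ∈ V) with hF
  have hvalξ : ∀ a (ω : Ω), (fun i : Fin m => ξ (i.1 + 1 + a) ω)
      = val (fun i => decide (ξ (i.1 + 1 + a) ω = 1)) := by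
    intro a ω
    funext i
    rcases hval (i.1 + 1 + a) ω with h | h <;> simp [hvaldef, h]
  have hmemA : ∀ a ε (ω : Ω), ω ∈ A a ε ↔ ∀ i : Fin m, ξ (i.1 + 1 + a) ω = val ε i := by
    intro a ε ω
    simp [hA]
  -- decomposition of preimages into atoms
  have hdecomp : ∀ a, (fun ω (i : Fin m) => ξ (i.1 + 1 + a) ω) ⁻¹' V = ⋃ ε ∈ F, A a ε := by
    intro a
    ext ω
    simp only [Set.mem_preimage, Set.mem_iUnion, hF, Finset.mem_filter, Finset.mem_univ,
      true_and, exists_prop]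
    constructor
    · intro hV
      refine ⟨fun i => decide (ξ (i.1 + 1 + a) ω = 1), ?_, ?_⟩
      · rw [← hvalξ a ω]; exact hV
      · rw [hmemA]
        intro i
        exact congrFun (hvalξ a ω) i
    · rintro ⟨ε, hε, hω⟩
      rw [hmemA] at hω
      have : (fun i : Fin m => ξ (i.1 + 1 + a) ω) = val ε := funext hω
      rw [show (fun i : Fin m => ξ (i.1 + 1 + a) ω) = val ε from funext hω]
      exact hε
  -- disjointness
  have hdisj : ∀ a, Set.PairwiseDisjoint (↑F) (A a) := by
    intro a ε _ ε' _ hne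
    refine Set.disjoint_left.2 fun ω h h' => hne ?_
    rw [hmemA] at h h'
    funext i
    have := (h i).symm.trans (h' i)
    by_contra hcon
    cases hε : ε i <;> cases hε' : ε' i <;>
      simp [hvaldef, hε, hε'] at this hcon <;> omega
  -- measurability of atoms
  have hAmeas : ∀ a ε, MeasurableSet (A a ε) := by
    intro a ε
    exact MeasurableSet.iInter fun i => (hmeas _) (measurableSet_singleton _)
  -- rewriting an atom as a biInter over a ℕ-Finset, and computing its measure
  have hprodInter : ∀ (S : Finset ℕ) (c : ℕ → ℤ),
      P (⋂ n ∈ S, ξ n ⁻¹' {c n}) = ∏ n ∈ S, P (ξ n ⁻¹' {c n}) := by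
    intro S c
    exact hindep.meas_biInter fun i _ => ⟨{c i}, measurableSet_singleton _, rfl⟩
  have hinj : ∀ a, Function.Injective (fun i : Fin m => i.1 + 1 + a) := by
    intro a i j hij
    simp only at hij
    exact Fin.ext (by omega)
  -- generic atom-as-biInter
  have hAeq : ∀ a ε (d : ℕ → ℤ), (∀ i : Fin m, d (i.1 + 1 + a) = val ε i) →
      A a ε = ⋂ n ∈ Finset.image (fun i : Fin m => i.1 + 1 + a) Finset.univ,
        ξ n ⁻¹' {d n} := by
    intro a ε d hd
    ext ω
    simp only [hA, Set.mem_iInter, Set.mem_preimage, Set.mem_singleton_iff,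
      Finset.mem_image, Finset.mem_univ, true_and]
    constructor
    · rintro h n ⟨i, rfl⟩
      rw [hd i]; exact h i
    · intro h i
      rw [← hd i]; exact h _ ⟨i, rfl⟩
  -- generic atom measure
  have hAmeasure : ∀ a ε (d : ℕ → ℤ), (∀ i : Fin m, d (i.1 + 1 + a) = val ε i) →
      P (A a ε) = ∏ i : Fin m, w (ε i) := by
    intro a ε d hd
    rw [hAeq a ε d hd, hprodInter, Finset.prod_image (fun i _ j _ h => hinj a h)]
    refine Finset.prod_congr rfl fun i _ => ?_
    rw [hd i]
    have : val ε i = if ε i then (1:ℤ) else -1 := rfl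
    rw [this]
    exact hpt (i.1 + 1 + a) (by omega) (ε i)
  -- choice of d for each a, ε
  have hdex : ∀ a ε, ∃ d : ℕ → ℤ, ∀ i : Fin m, d (i.1 + 1 + a) = val ε i := by
    intro a ε
    refine ⟨fun n => if h : n - 1 - a < m then val ε ⟨n - 1 - a, h⟩ else 1, fun i => ?_⟩
    have h2 : i.1 + 1 + a - 1 - a < m := by omega
    show (if h : i.1 + 1 + a - 1 - a < m then val ε ⟨i.1 + 1 + a - 1 - a, h⟩ else 1) = val ε i
    rw [dif_pos h2]
    congr 1
    exact Fin.ext (show i.1 + 1 + a - 1 - a = i.1 by omega)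
  -- measure of atoms
  have hPA : ∀ a ε, P (A a ε) = ∏ i : Fin m, w (ε i) := by
    intro a ε
    obtain ⟨d, hd⟩ := hdex a ε
    exact hAmeasure a ε d hd
  -- measure of the intersected atom
  have hPA1 : ∀ ε, P ({ω | ξ 1 ω = -1} ∩ A 1 ε)
      = ENNReal.ofReal q * ∏ i : Fin m, w (ε i) := by
    intro ε
    obtain ⟨d, hd⟩ := hdex 1 ε
    set d' : ℕ → ℤ := fun n => if n = 1 then -1 else d n with hd'
    have h1S : (1:ℕ) ∉ Finset.image (fun i : Fin m => i.1 + 1 + 1) Finset.univ := by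
      simp only [Finset.mem_image, Finset.mem_univ, true_and, not_exists]
      intro i; omega
    have hd'1 : ∀ i : Fin m, d' (i.1 + 1 + 1) = val ε i := by
      intro i
      show (if i.1 + 1 + 1 = 1 then (-1:ℤ) else d (i.1 + 1 + 1)) = val ε i
      rw [if_neg (by omega : ¬ (i.1 + 1 + 1 = 1))]
      exact hd i
    have h2 : ⋂ n ∈ Finset.image (fun i : Fin m => i.1 + 1 + 1) Finset.univ,
        ξ n ⁻¹' {d' n} = A 1 ε := (hAeq 1 ε d' hd'1).symm
    have hset : {ω | ξ 1 ω = -1} ∩ A 1 ε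
        = ⋂ n ∈ insert 1 (Finset.image (fun i : Fin m => i.1 + 1 + 1) Finset.univ),
            ξ n ⁻¹' {d' n} := by
      rw [Finset.set_biInter_insert, h2]
      have h3 : {ω | ξ 1 ω = -1} = ξ 1 ⁻¹' {d' 1} := by
        ext ω; simp [hd']
      rw [← h3]
    rw [hset, hprodInter, Finset.prod_insert h1S]
    congr 1
    · have : d' 1 = -1 := by simp [hd']
      rw [this]
      exact ladder_prob_neg_one p q hp0 hp1 hq P ξ hmeas hval hprob 1 le_rfl
    · rw [← hprodInter, ← hAeq 1 ε d' hd'1, hPA 1 ε]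
  -- summing up
  have hsum0 : P ((fun ω (i : Fin m) => ξ (i.1 + 1 + 0) ω) ⁻¹' V)
      = ∑ ε ∈ F, ∏ i : Fin m, w (ε i) := by
    rw [hdecomp 0, measure_biUnion_finset (hdisj 0) (fun ε _ => hAmeas 0 ε)]
    exact Finset.sum_congr rfl fun ε _ => hPA 0 ε
  have hsum1 : P ({ω | ξ 1 ω = -1} ∩ (fun ω (i : Fin m) => ξ (i.1 + 1 + 1) ω) ⁻¹' V)
      = ∑ ε ∈ F, ENNReal.ofReal q * ∏ i : Fin m, w (ε i) := by
    have hdisj1 : Set.PairwiseDisjoint (↑F)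
        (fun ε : Fin m → Bool => {ω | ξ 1 ω = -1} ∩ A 1 ε) :=
      fun ε hε ε' hε' hne => Disjoint.mono Set.inter_subset_right Set.inter_subset_right
        (hdisj 1 hε hε' hne)
    have hm1 : ∀ ε : Fin m → Bool, MeasurableSet ({ω | ξ 1 ω = -1} ∩ A 1 ε) := by
      intro ε
      exact MeasurableSet.inter ((hmeas 1) (measurableSet_singleton (-1))) (hAmeas 1 ε)
    rw [hdecomp 1, Set.inter_iUnion₂, measure_biUnion_finset hdisj1 (fun ε _ => hm1 ε)]
    exact Finset.sum_congr rfl fun ε _ => hPA1 ε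
  rw [hsum0, hsum1, ← Finset.mul_sum]

end Atoms

lemma ladderB_congr {Ω' : Type*} [MeasurableSpace Ω'] (ξ : ℕ → Ω → ℤ) (η : ℕ → Ω' → ℤ)
    (ω : Ω) (ν : Ω') (m : ℕ) (h : ∀ n, 1 ≤ n → n ≤ m → ξ n ω = η n ν) (L U x : ℤ) :
    ω ∈ ladderB ξ L U x m ↔ ν ∈ ladderB η L U x m := by
  have hS : ∀ l, l ≤ m → ladderS ξ l ω = ladderS η l ν := ladderS_congr ξ η ω ν m h
  simp only [mem_ladderB_iff]
  constructor <;> rintro ⟨l, h1, h2, h3⟩ <;> refine ⟨l, h1, ?_, fun j hj => ?_⟩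
  · rw [← hS l h1]; exact h2
  · rw [← hS j (by omega)]; exact h3 j hj
  · rw [hS l h1]; exact h2
  · rw [hS j (by omega)]; exact h3 j hj

def ladderHat (m : ℕ) : ℕ → (Fin m → ℤ) → ℤ :=
  fun n v => if h : 1 ≤ n ∧ n ≤ m then v ⟨n - 1, by omega⟩ else 1


/-- For `k ≥ 2`, `β_k(U-1) = p + q·β_(k-1)(U-2)`. -/
theorem ladder_betak_rec_top (p q : ℝ) (hp0 : 0 < p) (hp1 : p < 1) (hq : q = 1 - p)
    (P : Measure Ω) [IsProbabilityMeasure P]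
    (ξ : ℕ → Ω → ℤ) (hmeas : ∀ n, Measurable (ξ n))
    (hindep : iIndepFun ξ P)
    (hval : ∀ n ω, ξ n ω = 1 ∨ ξ n ω = -1)
    (hprob : ∀ n, 1 ≤ n → P {ω | ξ n ω = 1} = ENNReal.ofReal p)
    (L U : ℤ) (hLU : U - L ≥ 4) (k : ℕ) (hk : 2 ≤ k) :
    (P (ladderB ξ L U (U - 1) k)).toReal
      = p + q * (P (ladderB ξ L U (U - 2) (k - 1))).toReal := by
  obtain ⟨m, rfl⟩ : ∃ m, k = m + 1 := ⟨k - 1, by omega⟩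
  have hm : 1 ≤ m := by omega
  have hk1 : m + 1 - 1 = m := by omega
  rw [hk1]
  have hξ'meas : ∀ n, Measurable (fun ω => ξ (n + 1) ω) := fun n => hmeas (n + 1)
  -- the canonical event on the coordinate space
  set V : Set (Fin m → ℤ) := ladderB (ladderHat m) L U (U - 2) m with hV
  have hE0 : ladderB ξ L U (U - 2) m = (fun ω (i : Fin m) => ξ (i.1 + 1 + 0) ω) ⁻¹' V := by
    ext ω
    rw [Set.mem_preimage, hV]
    apply ladderB_congr
    intro n h1 h2
    unfold ladderHat
    rw [dif_pos ⟨h1, h2⟩]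
    show ξ n ω = ξ (n - 1 + 1 + 0) ω
    congr 1
    omega
  have hE1 : ladderB (fun n => ξ (n + 1)) L U (U - 2) m
      = (fun ω (i : Fin m) => ξ (i.1 + 1 + 1) ω) ⁻¹' V := by
    ext ω
    rw [Set.mem_preimage, hV]
    apply ladderB_congr
    intro n h1 h2
    unfold ladderHat
    rw [dif_pos ⟨h1, h2⟩]
    show ξ (n + 1) ω = ξ (n - 1 + 1 + 1) ω
    congr 1
    omega
  have hsplit := ladderB_top_split ξ hval L U hLU m hm
  have hBmeas' : MeasurableSet (ladderB (fun n => ξ (n + 1)) L U (U - 2) m) :=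
    measurableSet_ladderB _ hξ'meas L U (U - 2) m
  have hmeasneg : MeasurableSet {ω | ξ 1 ω = -1} := by
    have : {ω | ξ 1 ω = -1} = ξ 1 ⁻¹' {(-1:ℤ)} := by ext ω; simp
    rw [this]
    exact (hmeas 1) (measurableSet_singleton _)
  have hdisj2 : Disjoint {ω | ξ 1 ω = 1}
      ({ω | ξ 1 ω = -1} ∩ ladderB (fun n => ξ (n + 1)) L U (U - 2) m) := by
    refine Set.disjoint_left.2 fun ω h h' => ?_
    have h1 : ξ 1 ω = 1 := h
    have h2 : ξ 1 ω = -1 := h'.1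
    rw [h1] at h2
    exact absurd h2 (by decide)
  rw [hsplit, measure_union hdisj2 (hmeasneg.inter hBmeas'), hprob 1 le_rfl, hE1,
    ladder_key p q hp0 hp1 hq P ξ hmeas hindep hval hprob m V, ← hE0]
  have hq0 : 0 ≤ q := by rw [hq]; linarith
  rw [ENNReal.toReal_add ENNReal.ofReal_ne_top
      (ENNReal.mul_ne_top ENNReal.ofReal_ne_top (measure_ne_top P _)),
    ENNReal.toReal_mul, ENNReal.toReal_ofReal hp0.le, ENNReal.toReal_ofReal hq0]


end
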